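/- With the same setup: if k ≥ 1, P(h) = k, and (in case k ≥ 2) h ∉ C_k, then there exists n ≥ 0 such that P((τ¹_*)^n(h)) = 1. -/
import Mathlib


/-- The map `τ¹_*` on functions `ℤ* → ℤ/2ℤ` (encoded as functions on `ℤ` whose value at
`0` is irrelevant and set to `0`). -/
def tau1 (h : ℤ → ZMod 2) : ℤ → ZMod 2 := fun i =>
  if i < -2 then h (-i) + h (i - 1) + h i + h (i + 1)
  else if i = -2 then h (-i) + h (-2) + h (-3)
  else if i = -1 then h (-i) + h (-2)
  else if i = 0 then 0
  else h (-i)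

/-- The map `τ⁻¹_*` on functions `ℤ* → ℤ/2ℤ`. -/
def tauNeg1 (h : ℤ → ZMod 2) : ℤ → ZMod 2 := fun i =>
  if i < 0 then h (-i)
  else if i = 0 then 0
  else if i = 1 then h (-i) + h 2
  else if i = 2 then h (-i) + h 2 + h 3
  else h (-i) + h (i - 1) + h i + h (i + 1)

/-- The cylinder set `C_k = {h : h(k) = h(-k-1) = 1, h(i) = 0 for -k-1 < i < k, i ≠ 0}`. -/
def Cyl (k : ℤ) : Set (ℤ → ZMod 2) :=
  {h | h k = 1 ∧ h (-k - 1) = 1 ∧ ∀ i : ℤ, -k - 1 < i → i < k → i ≠ 0 → h i = 0}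

/-- `HasProx h k` says the proximity `P(h) = min {|i| : h(i) ≠ 0}` equals `k`. -/
def HasProx (h : ℤ → ZMod 2) (k : ℤ) : Prop :=
  (h k ≠ 0 ∨ h (-k) ≠ 0) ∧ ∀ i : ℤ, i ≠ 0 → |i| < k → h i = 0


lemma zmod2_ne : ∀ a : ZMod 2, a ≠ 0 → a = 1 := by decide

lemma hasProx_one (g : ℤ → ZMod 2) (h1 : g 1 ≠ 0 ∨ g (-1) ≠ 0) : HasProx g 1 := by
  refine ⟨h1, fun i hi habs => ?_⟩
  have := Int.one_le_abs hi
  omega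

lemma lemA (k : ℤ) (hk : 2 ≤ k) (g : ℤ → ZMod 2) (hP : HasProx g k)
    (hg : g (-k) ≠ 0) :
    HasProx (tau1 g) (k - 1) ∧ tau1 g (-(k - 1)) ≠ 0 := by
  have hz : ∀ j : ℤ, j ≠ 0 → -k < j → j < k → g j = 0 := by
    intro j hj h1 h2
    exact hP.2 j hj (abs_lt.mpr ⟨h1, h2⟩)
  have hzero : ∀ i : ℤ, i ≠ 0 → |i| < k - 1 → tau1 g i = 0 := by
    intro i hi habs
    obtain ⟨hL, hR⟩ := abs_lt.mp habs
    unfold tau1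
    split_ifs with h1 h2 h3
    · rw [hz (-i) (by omega) (by omega) (by omega), hz (i-1) (by omega) (by omega) (by omega),
        hz i (by omega) (by omega) (by omega), hz (i+1) (by omega) (by omega) (by omega)]
      simp
    · rw [hz (-i) (by omega) (by omega) (by omega), hz (-2) (by omega) (by omega) (by omega),
        hz (-3) (by omega) (by omega) (by omega)]
      simp
    · rw [hz (-i) (by omega) (by omega) (by omega), hz (-2) (by omega) (by omega) (by omega)]
      simp
    · exact hz (-i) (by omega) (by omega) (by omega)
  have hw : tau1 g (-(k - 1)) ≠ 0 := by
    unfold tau1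
    rcases eq_or_lt_of_le hk with h2 | h3
    · -- k = 2
      have hk2 : k = 2 := h2.symm
      subst hk2
      norm_num
      rw [hz 1 (by omega) (by omega) (by omega)]
      simpa using hg
    · rcases eq_or_lt_of_le (show (3:ℤ) ≤ k by omega) with h3' | h4
      · -- k = 3
        have hk3 : k = 3 := h3'.symm
        subst hk3
        norm_num
        rw [hz 2 (by omega) (by omega) (by omega), hz (-2) (by omega) (by omega) (by omega)]
        simpa using hg
      · -- k ≥ 4
        have hlt : -(k-1) < -2 := by omega
        rw [if_pos hlt]
        rw [show -(-(k-1)) = k - 1 by ring, show -(k-1) - 1 = -k by ring,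
          show -(k-1) + 1 = -(k-2) by ring]
        rw [hz (k-1) (by omega) (by omega) (by omega), hz (-(k-1)) (by omega) (by omega) (by omega),
          hz (-(k-2)) (by omega) (by omega) (by omega)]
        simpa using hg
  exact ⟨⟨Or.inr hw, hzero⟩, hw⟩

lemma lemB (k : ℤ) (hk : 2 ≤ k) (g : ℤ → ZMod 2) (hP : HasProx g k)
    (hg : g (-k) = 0) (hg2 : g (-k - 1) = 0) :
    HasProx (tau1 g) k ∧ tau1 g (-k) ≠ 0 := by
  have hgk : g k ≠ 0 := hP.1.resolve_right (by simpa using hg)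
  have hz : ∀ j : ℤ, j ≠ 0 → -k ≤ j → j < k → g j = 0 := by
    intro j hj h1 h2
    rcases eq_or_lt_of_le h1 with h | h
    · rw [← h]; exact hg
    · exact hP.2 j hj (abs_lt.mpr ⟨h, h2⟩)
  have hzero : ∀ i : ℤ, i ≠ 0 → |i| < k → tau1 g i = 0 := by
    intro i hi habs
    obtain ⟨hL, hR⟩ := abs_lt.mp habs
    unfold tau1
    split_ifs with h1 h2 h3
    · rw [hz (-i) (by omega) (by omega) (by omega), hz (i-1) (by omega) (by omega) (by omega),
        hz i (by omega) (by omega) (by omega), hz (i+1) (by omega) (by omega) (by omega)]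
      simp
    · rw [hz (-i) (by omega) (by omega) (by omega), hz (-2) (by omega) (by omega) (by omega),
        hz (-3) (by omega) (by omega) (by omega)]
      simp
    · rw [hz (-i) (by omega) (by omega) (by omega), hz (-2) (by omega) (by omega) (by omega)]
      simp
    · exact hz (-i) (by omega) (by omega) (by omega)
  have hw : tau1 g (-k) ≠ 0 := by
    unfold tau1
    rcases eq_or_lt_of_le hk with h2 | h3
    · -- k = 2
      have hk2 : k = 2 := h2.symm
      subst hk2
      norm_num
      rw [hg, show ((-3:ℤ)) = -2 - 1 by ring, hg2]
      simpa using hgk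
    · have hlt : -k < -2 := by omega
      rw [if_pos hlt]
      rw [show -(-k) = k by ring, show -k - 1 = -k-1 by ring, show -k + 1 = -(k-1) by ring]
      rw [hg2, hg, hz (-(k-1)) (by omega) (by omega) (by omega)]
      simpa using hgk
  exact ⟨⟨Or.inr hw, hzero⟩, hw⟩

lemma mainInd : ∀ m : ℕ, ∀ k : ℤ, k = m → 1 ≤ k → ∀ g : ℤ → ZMod 2, HasProx g k →
    (k = 1 ∨ g (-k) ≠ 0 ∨ g (-k - 1) = 0) → ∃ n : ℕ, HasProx (tau1^[n] g) 1 := by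
  intro m
  induction m with
  | zero => intro k hkm hk _ _ _; simp at hkm; omega
  | succ m ih =>
    intro k hkm hk g hP hcase
    rcases eq_or_lt_of_le hk with h1 | h2
    · exact ⟨0, by simpa [← h1] using hP⟩
    · have hk2 : 2 ≤ k := h2
      have hkm' : k - 1 = (m : ℤ) := by push_cast at hkm ⊢; omega
      by_cases hneg : g (-k) = 0
      · have hg2 : g (-k - 1) = 0 := by
          rcases hcase with h | h | h
          · omega
          · exact absurd hneg h
          · exact h
        obtain ⟨hPB, hwB⟩ := lemB k hk2 g hP hneg hg2
        obtain ⟨hPA, hwA⟩ := lemA k hk2 (tau1 g) hPB hwB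
        obtain ⟨n, hn⟩ := ih (k - 1) hkm' (by omega) (tau1 (tau1 g)) hPA
          (Or.inr (Or.inl hwA))
        exact ⟨n + 2, by
          rw [show n + 2 = n + 1 + 1 by ring, Function.iterate_succ_apply,
            Function.iterate_succ_apply]; exact hn⟩
      · obtain ⟨hPA, hwA⟩ := lemA k hk2 g hP hneg
        obtain ⟨n, hn⟩ := ih (k - 1) hkm' (by omega) (tau1 g) hPA (Or.inr (Or.inl hwA))
        exact ⟨n + 1, by rw [Function.iterate_succ_apply]; exact hn⟩

/-- If `k ≥ 1`, `P(h) = k`, and (in case `k ≥ 2`) `h ∉ C_k`, then there is an `n ≥ 0`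
with `P((τ¹_*)^n(h)) = 1`. -/
theorem stmt14 (k : ℤ) (hk : 1 ≤ k) (h : ℤ → ZMod 2)
    (hP : HasProx h k) (hC : 2 ≤ k → h ∉ Cyl k) :
    ∃ n : ℕ, HasProx (tau1^[n] h) 1 := by
  apply mainInd k.toNat k (Int.toNat_of_nonneg (by omega)).symm hk h hP
  rcases eq_or_lt_of_le hk with h1 | h2
  · exact Or.inl h1.symm
  · have hk2 : 2 ≤ k := h2
    have hnot := hC hk2
    by_cases hneg : h (-k) = 0
    · refine Or.inr (Or.inr ?_)
      have hk1 : h k = 1 := zmod2_ne _ (hP.1.resolve_right (by simpa using hneg))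
      by_contra hx
      have hx1 : h (-k - 1) = 1 := zmod2_ne _ hx
      refine hnot ⟨hk1, hx1, fun i a b c => ?_⟩
      rcases eq_or_lt_of_le (show -k ≤ i by omega) with e | e
      · rw [← e]; exact hneg
      · exact hP.2 i c (abs_lt.mpr ⟨e, b⟩)
    · exact Or.inr (Or.inl hneg)
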